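/- Let A be an invertible n×n complex matrix. Then there exists a decomposition A = U T V†, where U and V are n×n unitary matrices and T is an n×n upper-triangular matrix all of whose diagonal entries are equal to the geometric mean of the singular values of A, i.e., every diagonal entry of T equals |det A|^{1/n}, which is real and positive. -/

import Mathlib

open Matrix

lemma ext_unitary {n : ℕ} (v : Fin (n+1) → ℂ) (hv : star v ⬝ᵥ v = 1) :
    ∃ V : Matrix (Fin (n+1)) (Fin (n+1)) ℂ, Vᴴ * V = 1 ∧ ∀ i, V i 0 = v i := by
  set v' : EuclideanSpace ℂ (Fin (n+1)) := WithLp.toLp 2 v with hv'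
  have hinner : (inner ℂ v' v' : ℂ) = 1 := by
    rw [EuclideanSpace.inner_eq_star_dotProduct, dotProduct_comm]; exact hv
  have horth : Orthonormal ℂ (({0} : Set (Fin (n+1))).restrict fun _ => v') := by
    rw [orthonormal_iff_ite]
    rintro ⟨i, hi⟩ ⟨j, hj⟩
    simp only [Set.mem_singleton_iff] at hi hj
    subst hi; subst hj
    rw [if_pos rfl]; exact hinner
  obtain ⟨b, hb⟩ := horth.exists_orthonormalBasis_extension_of_card_eq (by simp)
  refine ⟨Matrix.of fun i j => b j i, ?_, fun i => ?_⟩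
  · ext j k
    have := orthonormal_iff_ite.mp b.orthonormal j k
    simpa [Matrix.mul_apply, Matrix.conjTranspose_apply, Matrix.one_apply,
      EuclideanSpace.inner_eq_star_dotProduct, dotProduct, mul_comm] using this
  · simpa using congrFun (congrArg (fun w : EuclideanSpace ℂ (Fin (n+1)) => (w : Fin (n+1) → ℂ)) (hb 0 rfl)) i

lemma exists_vec {n : ℕ} (A : Matrix (Fin (n+1)) (Fin (n+1)) ℂ) (c : ℝ) (hc : 0 < c)
    (hdet : ‖A.det‖ = c ^ (n+1)) :
    ∃ v : Fin (n+1) → ℂ, star v ⬝ᵥ v = 1 ∧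
      star (A *ᵥ v) ⬝ᵥ (A *ᵥ v) = ((c : ℂ))^2 := by
  have hH : (Aᴴ * A).IsHermitian := isHermitian_conjTranspose_mul_self A
  set μ : Fin (n+1) → ℝ := hH.eigenvalues with hμ
  set b := hH.eigenvectorBasis with hb
  -- determinant of AᴴA
  have hdetH : (Aᴴ * A).det = ((c ^ (n+1) : ℝ) : ℂ)^2 := by
    rw [Matrix.det_mul, Matrix.det_conjTranspose, ← hdet, Complex.star_def,
      ← Complex.normSq_eq_conj_mul_self, Complex.normSq_eq_norm_sq]
    push_cast
    ring
  have hprod : ∏ i, μ i = (c^2) ^ (n+1) := by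
    have h2 := hH.det_eq_prod_eigenvalues
    rw [hdetH] at h2
    push_cast at h2
    have h4 : ((((c^(n+1))^2 : ℝ)) : ℂ) = ((∏ i, hH.eigenvalues i : ℝ) : ℂ) := by
      push_cast
      exact h2
    have h3 : (c^(n+1))^2 = ∏ i, hH.eigenvalues i := Complex.ofReal_injective h4
    rw [hμ, ← h3]; ring
  have hμnn : ∀ i, 0 ≤ μ i := fun i =>
    Matrix.eigenvalues_conjTranspose_mul_self_nonneg A i
  have hμpos : ∀ i, 0 < μ i := by
    intro i
    rcases lt_or_eq_of_le (hμnn i) with h | h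
    · exact h
    · exfalso
      have : ∏ j, μ j = 0 := Finset.prod_eq_zero (Finset.mem_univ i) h.symm
      rw [hprod] at this
      exact absurd this (by positivity)
  set d := c^2 with hd
  have hd0 : 0 < d := by positivity
  -- exists above / below
  have hex_hi : ∃ i, d ≤ μ i := by
    by_contra h
    push_neg at h
    have : ∏ i, μ i < ∏ _i : Fin (n+1), d :=
      Finset.prod_lt_prod_of_nonempty (fun i _ => hμpos i) (fun i _ => h i) Finset.univ_nonempty
    rw [hprod, Finset.prod_const] at this
    simp at this
  have hex_lo : ∃ j, μ j ≤ d := by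
    by_contra h
    push_neg at h
    have : ∏ _i : Fin (n+1), d < ∏ i, μ i :=
      Finset.prod_lt_prod_of_nonempty (fun i _ => hd0) (fun i _ => h i) Finset.univ_nonempty
    rw [hprod, Finset.prod_const] at this
    simp at this
  obtain ⟨i0, hi0⟩ := hex_hi
  obtain ⟨j0, hj0⟩ := hex_lo
  -- basic facts about eigenvectors as plain vectors
  have hbd : ∀ i j : Fin (n+1), star (⇑(b i) : Fin (n+1) → ℂ) ⬝ᵥ ⇑(b j)
      = if i = j then 1 else 0 := by
    intro i j
    have := orthonormal_iff_ite.mp b.orthonormal i j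
    rwa [EuclideanSpace.inner_eq_star_dotProduct, dotProduct_comm] at this
  have hmv : ∀ i : Fin (n+1), (Aᴴ * A) *ᵥ ⇑(b i) = (μ i : ℂ) • ⇑(b i) := by
    intro i
    rw [hH.mulVec_eigenvectorBasis]
    ext k
    simp [RCLike.real_smul_eq_coe_smul (K := ℂ)]
    rfl
  -- ‖A v‖² = ⟨v, H v⟩
  have key : ∀ v : Fin (n+1) → ℂ,
      star (A *ᵥ v) ⬝ᵥ (A *ᵥ v) = star v ⬝ᵥ ((Aᴴ * A) *ᵥ v) := by
    intro v
    simp only [Matrix.star_mulVec, Matrix.dotProduct_mulVec, Matrix.vecMul_vecMul]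
  rcases eq_or_lt_of_le hi0 with heq | hlt
  · -- μ i0 = d
    refine ⟨⇑(b i0), by simpa using hbd i0 i0, ?_⟩
    rw [key, hmv i0, dotProduct_smul, hbd i0 i0]
    simp [← heq, hd]
  · -- μ j0 ≤ d < μ i0
    have hne : i0 ≠ j0 := by
      rintro rfl
      exact absurd hj0 (not_le.mpr hlt)
    set t := (d - μ j0) / (μ i0 - μ j0) with ht
    have hden : 0 < μ i0 - μ j0 := by linarith
    have ht0 : 0 ≤ t := by
      apply div_nonneg <;> linarith
    have ht1 : t ≤ 1 := by
      rw [div_le_one hden]; linarith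
    set s := Real.sqrt t with hs
    set r := Real.sqrt (1 - t) with hr
    have hs2 : (s:ℝ)^2 = t := Real.sq_sqrt ht0
    have hr2 : (r:ℝ)^2 = 1 - t := Real.sq_sqrt (by linarith)
    set x : Fin (n+1) → ℂ := ⇑(b i0) with hx
    set y : Fin (n+1) → ℂ := ⇑(b j0) with hy
    refine ⟨(s:ℂ) • x + (r:ℂ) • y, ?_, ?_⟩
    · have hxx := hbd i0 i0
      have hxy := hbd i0 j0
      have hyx := hbd j0 i0
      have hyy := hbd j0 j0
      rw [if_pos rfl] at hxx hyy
      rw [if_neg hne] at hxy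
      rw [if_neg (Ne.symm hne)] at hyx
      simp only [← hx, ← hy] at hxx hxy hyx hyy
      simp only [star_add, star_smul, add_dotProduct, dotProduct_add,
        smul_dotProduct, dotProduct_smul, ← hx, ← hy, hxx, hxy, hyx, hyy]
      simp only [Complex.star_def, Complex.conj_ofReal, smul_eq_mul]
      have : ((s:ℂ)^2 + (r:ℂ)^2 : ℂ) = 1 := by
        have := hs2; have := hr2
        push_cast [← hs2, ← hr2]
        norm_cast
        push_cast
        linarith
      ring_nf
      ring_nf at this
      linear_combination this
    · rw [key]
      rw [Matrix.mulVec_add, Matrix.mulVec_smul, Matrix.mulVec_smul, hmv i0, hmv j0]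
      have hxx := hbd i0 i0
      have hxy := hbd i0 j0
      have hyx := hbd j0 i0
      have hyy := hbd j0 j0
      rw [if_pos rfl] at hxx hyy
      rw [if_neg hne] at hxy
      rw [if_neg (Ne.symm hne)] at hyx
      simp only [← hx, ← hy] at hxx hxy hyx hyy
      simp only [star_add, star_smul, add_dotProduct, dotProduct_add,
        smul_dotProduct, dotProduct_smul, smul_smul, ← hx, ← hy, hxx, hxy, hyx, hyy]
      simp only [Complex.star_def, Complex.conj_ofReal, smul_eq_mul]
      have hgoal : (s:ℝ)^2 * μ i0 + (r:ℝ)^2 * μ j0 = c^2 := by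
        rw [hs2, hr2, ht]
        field_simp <;> ring_nf <;> nlinarith [hden]
      have : (((s:ℝ)^2 * μ i0 + (r:ℝ)^2 * μ j0 : ℝ) : ℂ) = ((c:ℂ))^2 := by
        rw [hgoal]; push_cast; ring
      push_cast at this ⊢
      linear_combination this

section helpers
variable {n : ℕ}

lemma submatrix_mul_e (e : Fin 1 ⊕ Fin n ≃ Fin (n+1))
    (X Y : Matrix (Fin 1 ⊕ Fin n) (Fin 1 ⊕ Fin n) ℂ) :
    X.submatrix e.symm e.symm * Y.submatrix e.symm e.symm
      = (X * Y).submatrix e.symm e.symm :=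
  Matrix.submatrix_mul_equiv X Y _ e.symm _

lemma lift_conjT (e : Fin 1 ⊕ Fin n ≃ Fin (n+1)) (M : Matrix (Fin n) (Fin n) ℂ) :
    ((Matrix.fromBlocks (1 : Matrix (Fin 1) (Fin 1) ℂ) 0 0 M).submatrix e.symm e.symm)ᴴ
      = (Matrix.fromBlocks (1 : Matrix (Fin 1) (Fin 1) ℂ) 0 0 Mᴴ).submatrix e.symm e.symm := by
  rw [Matrix.conjTranspose_submatrix, Matrix.fromBlocks_conjTranspose]
  simp

lemma lift_unitary (e : Fin 1 ⊕ Fin n ≃ Fin (n+1)) {M : Matrix (Fin n) (Fin n) ℂ}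
    (hM : Mᴴ * M = 1) :
    ((Matrix.fromBlocks (1 : Matrix (Fin 1) (Fin 1) ℂ) 0 0 M).submatrix e.symm e.symm)ᴴ *
      ((Matrix.fromBlocks (1 : Matrix (Fin 1) (Fin 1) ℂ) 0 0 M).submatrix e.symm e.symm) = 1 := by
  rw [lift_conjT, submatrix_mul_e, Matrix.fromBlocks_multiply]
  simp [hM, Matrix.fromBlocks_one]

end helpers

lemma gmd_aux : ∀ (n : ℕ) (A : Matrix (Fin n) (Fin n) ℂ) (c : ℝ), 0 < c →
    ‖A.det‖ = c ^ n →
    ∃ U V T : Matrix (Fin n) (Fin n) ℂ,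
      Uᴴ * U = 1 ∧ Vᴴ * V = 1 ∧
      (∀ j k : Fin n, k < j → T j k = 0) ∧
      (∀ i : Fin n, T i i = ((c : ℝ) : ℂ)) ∧
      A = U * T * Vᴴ := by
  intro n
  induction n with
  | zero =>
    intro A c hc hdet
    refine ⟨1, 1, 1, by simp, by simp, fun j _ _ => j.elim0, fun i => i.elim0, ?_⟩
    simp only [Matrix.conjTranspose_one, Matrix.mul_one]
    apply Matrix.ext
    intro i
    exact i.elim0
  | succ n IH =>
    intro A c hc hdet
    have hc0 : (c : ℂ) ≠ 0 := by
      simpa using ne_of_gt hc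
    obtain ⟨v, hv1, hv2⟩ := exists_vec A c hc hdet
    set u : Fin (n+1) → ℂ := ((c:ℂ))⁻¹ • (A *ᵥ v) with hu_def
    have hu1 : star u ⬝ᵥ u = 1 := by
      rw [hu_def]
      simp only [star_smul, smul_dotProduct, dotProduct_smul, hv2, smul_eq_mul,
        star_inv₀, Complex.star_def, Complex.conj_ofReal]
      field_simp
    obtain ⟨U₁, hU₁, hU₁0⟩ := ext_unitary u hu1
    obtain ⟨V₁, hV₁, hV₁0⟩ := ext_unitary v hv1
    have hU₁' : U₁ * U₁ᴴ = 1 := mul_eq_one_comm.mp hU₁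
    have hV₁' : V₁ * V₁ᴴ = 1 := mul_eq_one_comm.mp hV₁
    set B : Matrix (Fin (n+1)) (Fin (n+1)) ℂ := U₁ᴴ * A * V₁ with hB
    have cancelU : ∀ X : Matrix (Fin (n+1)) (Fin (n+1)) ℂ, U₁ * (U₁ᴴ * X) = X := by
      intro X; rw [← Matrix.mul_assoc, hU₁', Matrix.one_mul]
    have hA_eq : A = U₁ * B * V₁ᴴ := by
      rw [hB]
      simp only [Matrix.mul_assoc, cancelU, hV₁', Matrix.mul_one]
    have hAv : A *ᵥ v = (c:ℂ) • u := by
      rw [hu_def, smul_smul]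
      field_simp
      rw [one_smul]
    have huvec : ∀ i, (U₁ᴴ *ᵥ u) i = (1 : Matrix (Fin (n+1)) (Fin (n+1)) ℂ) i 0 := by
      intro i
      rw [← hU₁]
      simp [Matrix.mul_apply, Matrix.mulVec, dotProduct, Matrix.conjTranspose_apply, hU₁0]
    have hBcol : ∀ i, B i 0 = (c:ℂ) * (1 : Matrix (Fin (n+1)) (Fin (n+1)) ℂ) i 0 := by
      intro i
      have h1 : B i 0 = ((U₁ᴴ * A) *ᵥ v) i := by
        rw [hB]
        simp only [Matrix.mul_apply, Matrix.mulVec, dotProduct]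
        exact Finset.sum_congr rfl fun k _ => by rw [hV₁0]
      rw [h1, ← Matrix.mulVec_mulVec, hAv, Matrix.mulVec_smul]
      simp [huvec i]
    -- block structure
    set e : Fin 1 ⊕ Fin n ≃ Fin (n+1) := finSumFinEquiv.trans (finCongr (Nat.add_comm 1 n)) with he
    have he0 : e (Sum.inl 0) = 0 := by
      apply Fin.ext; simp [he]
    have hes : ∀ j : Fin n, e (Sum.inr j) = j.succ := by
      intro j; apply Fin.ext; simp [he, Nat.add_comm]
    have hsymm0 : e.symm 0 = Sum.inl 0 := by
      rw [Equiv.symm_apply_eq, he0]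
    have hsymms : ∀ j : Fin n, e.symm j.succ = Sum.inr j := by
      intro j; rw [Equiv.symm_apply_eq, hes]
    set A' : Matrix (Fin n) (Fin n) ℂ := Matrix.of (fun i j : Fin n => B i.succ j.succ) with hA'def
    set W : Matrix (Fin 1) (Fin n) ℂ := Matrix.of (fun _ j => B 0 j.succ) with hWdef
    set C : Matrix (Fin 1) (Fin 1) ℂ := Matrix.of (fun _ _ => (c:ℂ)) with hCdef
    have hBblock : B = (Matrix.fromBlocks C W 0 A').submatrix e.symm e.symm := by
      have main : ∀ si sj, B (e si) (e sj) = Matrix.fromBlocks C W 0 A' si sj := by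
        rintro (a | i') (b | j')
        · rw [Subsingleton.elim a 0, Subsingleton.elim b 0, he0]
          rw [hBcol 0]
          simp [hCdef]
        · rw [Subsingleton.elim a 0, he0, hes]
          simp [hWdef]
        · rw [Subsingleton.elim b 0, he0, hes]
          rw [hBcol i'.succ]
          simp [Matrix.one_apply_ne (Fin.succ_ne_zero i')]
        · rw [hes, hes]
          simp [hA'def]
      apply Matrix.ext
      intro i j
      rw [Matrix.submatrix_apply]
      conv_lhs => rw [← e.apply_symm_apply i, ← e.apply_symm_apply j]
      exact main _ _
    have hdetB : B.det = (c:ℂ) * A'.det := by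
      rw [hBblock, Matrix.det_submatrix_equiv_self, Matrix.det_fromBlocks_zero₂₁,
        Matrix.det_fin_one]
      simp [hCdef]
    have habsU : ‖U₁.det‖ = 1 := by
      have h1 : star U₁.det * U₁.det = 1 := by
        rw [← Matrix.det_conjTranspose, ← Matrix.det_mul, hU₁, Matrix.det_one]
      have h2 := congrArg (fun z : ℂ => ‖z‖) h1
      simp only [norm_mul, Complex.star_def, Complex.norm_conj, norm_one] at h2
      nlinarith [norm_nonneg U₁.det]
    have habsV : ‖V₁.det‖ = 1 := by
      have h1 : star V₁.det * V₁.det = 1 := by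
        rw [← Matrix.det_conjTranspose, ← Matrix.det_mul, hV₁, Matrix.det_one]
      have h2 := congrArg (fun z : ℂ => ‖z‖) h1
      simp only [norm_mul, Complex.star_def, Complex.norm_conj, norm_one] at h2
      nlinarith [norm_nonneg V₁.det]
    have habsB : ‖B.det‖ = c ^ (n+1) := by
      rw [hB, Matrix.det_mul, Matrix.det_mul, norm_mul, norm_mul, Matrix.det_conjTranspose,
        Complex.star_def, Complex.norm_conj, habsU, habsV, hdet]
      ring
    have habsA' : ‖A'.det‖ = c ^ n := by
      have h1 : c * ‖A'.det‖ = c * c ^ n := by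
        calc c * ‖A'.det‖
            = ‖((c:ℂ))‖ * ‖A'.det‖ := by
              rw [Complex.norm_real, Real.norm_of_nonneg hc.le]
          _ = ‖((c:ℂ) * A'.det)‖ := (norm_mul _ _).symm
          _ = ‖B.det‖ := by rw [hdetB]
          _ = c ^ (n+1) := habsB
          _ = c * c ^ n := by ring
      exact mul_left_cancel₀ (ne_of_gt hc) h1
    obtain ⟨U', V', T', hU'u, hV'u, hT'tri, hT'diag, hA'eq⟩ := IH A' c hc habsA'
    have hV'' : V' * V'ᴴ = 1 := mul_eq_one_comm.mp hV'u
    set LU : Matrix (Fin (n+1)) (Fin (n+1)) ℂ :=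
      (Matrix.fromBlocks 1 0 0 U').submatrix e.symm e.symm with hLU
    set LV : Matrix (Fin (n+1)) (Fin (n+1)) ℂ :=
      (Matrix.fromBlocks 1 0 0 V').submatrix e.symm e.symm with hLV
    set T : Matrix (Fin (n+1)) (Fin (n+1)) ℂ :=
      (Matrix.fromBlocks C (W * V') 0 T').submatrix e.symm e.symm with hT
    refine ⟨U₁ * LU, V₁ * LV, T, ?_, ?_, ?_, ?_, ?_⟩
    · rw [Matrix.conjTranspose_mul]
      calc LUᴴ * U₁ᴴ * (U₁ * LU) = LUᴴ * (U₁ᴴ * U₁) * LU := by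
            simp only [Matrix.mul_assoc]
        _ = LUᴴ * LU := by rw [hU₁, Matrix.mul_one]
        _ = 1 := lift_unitary e hU'u
    · rw [Matrix.conjTranspose_mul]
      calc LVᴴ * V₁ᴴ * (V₁ * LV) = LVᴴ * (V₁ᴴ * V₁) * LV := by
            simp only [Matrix.mul_assoc]
        _ = LVᴴ * LV := by rw [hV₁, Matrix.mul_one]
        _ = 1 := lift_unitary e hV'u
    · intro j k hkj
      rw [hT]
      induction j using Fin.cases with
      | zero => exact absurd hkj (Fin.not_lt_zero k)
      | succ j' =>
        induction k using Fin.cases with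
        | zero =>
          rw [Matrix.submatrix_apply, hsymm0, hsymms]
          simp
        | succ k' =>
          rw [Matrix.submatrix_apply, hsymms, hsymms]
          exact hT'tri j' k' (by simpa [Fin.succ_lt_succ_iff] using hkj)
    · intro i
      rw [hT]
      induction i using Fin.cases with
      | zero =>
        rw [Matrix.submatrix_apply, hsymm0]
        simp [hCdef]
      | succ i' =>
        rw [Matrix.submatrix_apply, hsymms]
        exact hT'diag i'
    · -- A = (U₁ * LU) * T * (V₁ * LV)ᴴ
      have hmid : LU * T * LVᴴ = B := by
        rw [hLU, hLV, hT, lift_conjT, submatrix_mul_e, submatrix_mul_e,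
          Matrix.fromBlocks_multiply, Matrix.fromBlocks_multiply]
        rw [hBblock]
        apply congrArg (fun M : Matrix (Fin 1 ⊕ Fin n) (Fin 1 ⊕ Fin n) ℂ =>
          M.submatrix ⇑e.symm ⇑e.symm)
        simp only [Matrix.one_mul, Matrix.mul_one, Matrix.zero_mul, Matrix.mul_zero,
          add_zero, zero_add]
        rw [Matrix.mul_assoc W, hV'', Matrix.mul_one, ← hA'eq]
      rw [Matrix.conjTranspose_mul]
      calc A = U₁ * B * V₁ᴴ := hA_eq
        _ = U₁ * (LU * T * LVᴴ) * V₁ᴴ := by rw [hmid]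
        _ = U₁ * LU * T * (LVᴴ * V₁ᴴ) := by simp only [Matrix.mul_assoc]

/-- Geometric Mean Decomposition (GMD): any invertible `n × n` complex matrix `A` can be
written as `A = U * T * Vᴴ` with `U`, `V` unitary and `T` upper triangular whose diagonal
entries all equal `|det A| ^ (1/n)` (the geometric mean of the singular values of `A`),
a positive real number. -/
theorem gmd (n : ℕ) (A : Matrix (Fin n) (Fin n) ℂ) (hA : IsUnit A.det) :
    ∃ U V T : Matrix (Fin n) (Fin n) ℂ,
      Uᴴ * U = 1 ∧ Vᴴ * V = 1 ∧
      (∀ j k : Fin n, k < j → T j k = 0) ∧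
      (0 < ‖A.det‖ ^ ((1 : ℝ) / n)) ∧
      (∀ i : Fin n, T i i = ((‖A.det‖ ^ ((1 : ℝ) / n) : ℝ) : ℂ)) ∧
      A = U * T * Vᴴ := by
  have habs : 0 < ‖A.det‖ := by
    have hne : A.det ≠ 0 := by
      intro h
      rw [h] at hA
      exact (by simpa using hA : IsUnit (0 : ℂ)).ne_zero rfl
    exact norm_pos_iff.mpr hne
  set c : ℝ := ‖A.det‖ ^ ((1 : ℝ) / n) with hcdef
  have hc : 0 < c := Real.rpow_pos_of_pos habs _
  cases n with
  | zero =>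
    refine ⟨1, 1, 1, by simp, by simp, fun j _ _ => j.elim0, hc, fun i => i.elim0, ?_⟩
    simp only [Matrix.conjTranspose_one, Matrix.mul_one]
    apply Matrix.ext
    intro i
    exact i.elim0
  | succ m =>
    have hm : ((m + 1 : ℕ) : ℝ) ≠ 0 := by positivity
    have hcn : ‖A.det‖ = c ^ (m + 1) := by
      rw [hcdef, ← Real.rpow_natCast (‖A.det‖ ^ ((1:ℝ)/(m+1:ℕ))) (m+1),
        ← Real.rpow_mul (le_of_lt habs)]
      rw [one_div, inv_mul_cancel₀ hm, Real.rpow_one]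
    obtain ⟨U, V, T, h1, h2, h3, h4, h5⟩ := gmd_aux (m + 1) A c hc hcn
    exact ⟨U, V, T, h1, h2, h3, hc, h4, h5⟩
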